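/- The set k⁻¹(3) is not a G_δ subset of ℝ (it is not a countable intersection of open sets). -/

import Mathlib

open Filter Set MeasureTheory Topology
open scoped ENNReal NNReal

noncomputable section

/-- A dimension function: positive on `(0,∞)`, nondecreasing, right-continuous,
with `h r → 0` as `r → 0⁺`. -/
def DimensionFunction (h : ℝ → ℝ) : Prop :=
  (∀ r : ℝ, 0 < r → 0 < h r) ∧ MonotoneOn h (Set.Ioi (0 : ℝ)) ∧
    (∀ r : ℝ, 0 < r → ContinuousWithinAt h (Set.Ici r) r) ∧
    Tendsto h (nhdsWithin 0 (Set.Ioi 0)) (nhds 0)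

/-- The generalized Hausdorff (outer) measure `H^h` associated to a gauge function `h`. -/
def hMeas (h : ℝ → ℝ) : Measure ℝ :=
  Measure.mkMetric (fun d : ℝ≥0∞ => ENNReal.ofReal (h d.toReal))

/-- The set of rational solutions (in lowest terms) of `|x - p/q| < 1/(c q²)`. -/
def diophSols (c : ℝ) (x : ℝ) : Set ℚ :=
  {r : ℚ | |x - (r : ℝ)| < 1 / (c * (r.den : ℝ) ^ 2)}

/-- The best constant of Diophantine approximation of `x`, valued in `(0,∞]`:
`k(x) = sup { c > 0 : |x - p/q| < 1/(c q²) has infinitely many rational solutions }`. -/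
def kval (x : ℝ) : ℝ≥0∞ :=
  sSup (ENNReal.ofReal '' {c : ℝ | 0 < c ∧ (diophSols c x).Infinite})

/-- `k⁻¹(3)`, the set of irrational numbers with `k(x) = 3`. -/
def kinv3 : Set ℝ := {x : ℝ | Irrational x ∧ kval x = 3}

/-- `x` is attainable: `|x - p/q| ≤ 1/(3 q²)` has infinitely many rational solutions. -/
def Attainable (x : ℝ) : Prop :=
  {r : ℚ | |x - (r : ℝ)| ≤ 1 / (3 * (r.den : ℝ) ^ 2)}.Infinite

/-- Value of a finite continued fraction `[a₀; a₁, …, aₙ]`. -/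
def cfListVal : List ℕ → ℝ
  | [] => 0
  | a :: l => (a : ℝ) + 1 / cfListVal l

/-- Value of the infinite continued fraction `[a 0; a 1, a 2, …]`. -/
def cfVal (a : ℕ → ℕ) : ℝ :=
  limUnder atTop (fun n => cfListVal ((List.range (n + 1)).map a))

/-- Value of the infinite continued fraction `[0; b 1, b 2, …]`. -/
def cfVal01 (b : ℕ → ℕ) : ℝ :=
  cfVal (fun n => if n = 0 then 0 else b n)

/-- `λ_i(a) = [a_i; a_{i+1}, a_{i+2}, …] + [0; a_{i-1}, a_{i-2}, …]` for a bi-infinite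
sequence `a`. -/
def lambdaZ (i : ℤ) (a : ℤ → ℕ) : ℝ :=
  cfVal (fun n => a (i + n)) + cfVal01 (fun n => a (i - n))

/-- The subshift `Σ_t` of bi-infinite sequences of positive integers with
`sup_n λ_n(a) ≤ t`. -/
def SigmaT (t : ℝ) : Set (ℤ → ℕ) :=
  {a | (∀ n, 0 < a n) ∧ ∀ i : ℤ, lambdaZ i a ≤ t}

/-- `Σ(t, n)`: length-`n` words over the positive integers occurring as subwords of
sequences in `Σ_t`. -/
def SigmaWords (t : ℝ) (n : ℕ) : Set (Fin n → ℕ) :=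
  {w | ∃ a ∈ SigmaT t, ∃ i : ℤ, ∀ j : Fin n, w j = a (i + (j : ℤ))}

/-- The set `K_t`: numbers `[0; a 1, a 2, …] ∈ [0,1]` whose sequence of partial quotients
extends to a bi-infinite sequence of positive integers with `λ_k ≤ t` for all `k ∈ ℤ`. -/
def Kt (t : ℝ) : Set ℝ :=
  {x | x ∈ Set.Icc (0 : ℝ) 1 ∧ ∃ a : ℤ → ℕ, (∀ n, 0 < a n) ∧
    x = cfVal01 (fun j : ℕ => a (j : ℤ)) ∧ ∀ i : ℤ, lambdaZ i a ≤ t}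

/-- Concatenation of the blocks `1^{e 1} 2 2 1^{e 2} 2 2 ⋯ 1^{e i} 2 2`. -/
def blockList (e : ℕ → ℕ) : ℕ → List ℕ
  | 0 => []
  | i + 1 => blockList e i ++ (List.replicate (e (i + 1)) 1 ++ [2, 2])

/-- The `n`-th (0-indexed) partial quotient of `[0; 1^{e 1}, 2, 2, 1^{e 2}, 2, 2, …]`. -/
def quotSeq (e : ℕ → ℕ) (n : ℕ) : ℕ := (blockList e (n + 1)).getD n 1

/-- `Γ_h(r) = r · inf_{0 < s ≤ r} h(s)/s`. -/
def GammaH (h : ℝ → ℝ) (r : ℝ) : ℝ :=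
  r * sInf ((fun s => h s / s) '' Set.Ioc 0 r)

namespace KV

/-- shift of a sequence -/
def sh (a : ℕ → ℕ) : ℕ → ℕ := fun n => a (n + 1)

lemma sh_iterate (a : ℕ → ℕ) (k n : ℕ) : (sh^[k] a) n = a (n + k) := by
  induction k generalizing a n with
  | zero => simp
  | succ k ih =>
    rw [Function.iterate_succ_apply, ih]
    simp [sh, Nat.add_assoc, Nat.add_comm 1 k]

/-- numerators -/
def Hh (a : ℕ → ℕ) : ℕ → ℕ
  | 0 => 1
  | 1 => a 0
  | n + 2 => a (n + 1) * Hh a (n + 1) + Hh a n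

/-- denominators (shifted index: `Kk a (n+1)` = usual `q_n`) -/
def Kk (a : ℕ → ℕ) : ℕ → ℕ
  | 0 => 0
  | 1 => 1
  | n + 2 => a (n + 1) * Kk a (n + 1) + Kk a n

variable {a : ℕ → ℕ}

lemma Hh_shift (a : ℕ → ℕ) (n : ℕ) :
    Hh a (n + 1) = a 0 * Hh (sh a) n + Kk (sh a) n := by
  induction n using Nat.twoStepInduction with
  | zero => simp [Hh, Kk]
  | one => simp [Hh, Kk, sh]; ring
  | more n ih1 ih2 =>
    show Hh a (n + 3) = _
    have : Hh a (n+3) = a (n+2) * Hh a (n+2) + Hh a (n+1) := rfl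
    rw [this, ih1, ih2]
    show _ = a 0 * Hh (sh a) (n+2) + Kk (sh a) (n+2)
    have h1 : Hh (sh a) (n+2) = (sh a) (n+1) * Hh (sh a) (n+1) + Hh (sh a) n := rfl
    have h2 : Kk (sh a) (n+2) = (sh a) (n+1) * Kk (sh a) (n+1) + Kk (sh a) n := rfl
    rw [h1, h2]
    show a (n + 2) * _ + _ = _
    have : (sh a) (n+1) = a (n+2) := rfl
    rw [this]; ring

lemma Kk_shift (a : ℕ → ℕ) (n : ℕ) : Kk a (n + 1) = Hh (sh a) n := by
  induction n using Nat.twoStepInduction with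
  | zero => simp [Hh, Kk]
  | one => simp [Hh, Kk, sh]
  | more n ih1 ih2 =>
    show Kk a (n + 3) = Hh (sh a) (n+2)
    have h0 : Kk a (n+3) = a (n+2) * Kk a (n+2) + Kk a (n+1) := rfl
    have h1 : Hh (sh a) (n+2) = (sh a) (n+1) * Hh (sh a) (n+1) + Hh (sh a) n := rfl
    rw [h0, h1, ih1, ih2]
    have : (sh a) (n+1) = a (n+2) := rfl
    rw [this]

lemma Hh_pos (ha : ∀ n, 1 ≤ a n) (n : ℕ) : 1 ≤ Hh a n := by
  induction n using Nat.twoStepInduction with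
  | zero => simp [Hh]
  | one => simpa [Hh] using ha 0
  | more n ih1 ih2 =>
    have : Hh a (n+2) = a (n+1) * Hh a (n+1) + Hh a n := rfl
    rw [this]
    nlinarith [ha (n+1)]

lemma Kk_pos (ha : ∀ n, 1 ≤ a n) (n : ℕ) : 1 ≤ Kk a (n + 1) := by
  induction n using Nat.twoStepInduction with
  | zero => simp [Kk]
  | one => show 1 ≤ a 1 * Kk a 1 + Kk a 0; simp [Kk]; exact ha 1
  | more n ih1 ih2 =>
    show 1 ≤ a (n+2) * Kk a (n+2) + Kk a (n+1)
    nlinarith [ha (n+2)]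

lemma Kk_mono (ha : ∀ n, 1 ≤ a n) (n : ℕ) : Kk a (n + 1) ≤ Kk a (n + 2) := by
  cases n with
  | zero => show Kk a 1 ≤ a 1 * Kk a 1 + Kk a 0; simp [Kk]; nlinarith [ha 1]
  | succ n =>
    show Kk a (n+2) ≤ a (n+2) * Kk a (n+2) + Kk a (n+1)
    nlinarith [ha (n+2), Kk_pos ha n, Kk_pos ha (n+1)]

lemma Kk_strict (ha : ∀ n, 1 ≤ a n) (n : ℕ) : Kk a (n + 2) < Kk a (n + 3) := by
  show Kk a (n+2) < a (n+2) * Kk a (n+2) + Kk a (n+1)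
  nlinarith [ha (n+2), Kk_pos ha n, Kk_pos ha (n+1)]

lemma Kk_le_of_le (ha : ∀ n, 1 ≤ a n) {m n : ℕ} (h : m ≤ n) : Kk a (m+1) ≤ Kk a (n+1) := by
  induction n with
  | zero => simp_all
  | succ n ih =>
    rcases Nat.lt_or_ge m (n+1) with h' | h'
    · exact le_trans (ih (Nat.lt_succ_iff.mp h')) (Kk_mono ha n)
    · have : m = n + 1 := le_antisymm h h'
      simp [this]

lemma Kk_prod_ge (ha : ∀ n, 1 ≤ a n) (n : ℕ) :
    2 ^ n ≤ Kk a (n + 1) * Kk a (n + 2) := by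
  induction n with
  | zero => simp [Kk]; nlinarith [ha 1]
  | succ n ih =>
    have h1 : Kk a (n+3) = a (n+2) * Kk a (n+2) + Kk a (n+1) := rfl
    have h2 : Kk a (n+1) ≤ Kk a (n+2) := Kk_mono ha n
    have h3 : 1 ≤ Kk a (n+1) := Kk_pos ha n
    have h4 : 1 ≤ Kk a (n+2) := Kk_pos ha (n+1)
    calc 2^(n+1) = 2^n * 2 := by ring
    _ ≤ Kk a (n+1) * Kk a (n+2) * 2 := by nlinarith
    _ ≤ Kk a (n+2) * Kk a (n+3) := by
        rw [h1]
        have h5 := ha (n+2)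
        nlinarith [mul_le_mul_of_nonneg_left h2 (Nat.zero_le (Kk a (n+2)))]

/-- determinant identity -/
lemma det_eq (a : ℕ → ℕ) (n : ℕ) :
    (Hh a (n+1) : ℤ) * Kk a n - Hh a n * Kk a (n+1) = (-1) ^ (n + 1) := by
  induction n with
  | zero => simp [Hh, Kk]
  | succ n ih =>
    have h1 : (Hh a (n+2) : ℤ) = a (n+1) * Hh a (n+1) + Hh a n := by
      push_cast [Hh]; ring
    have h2 : (Kk a (n+2) : ℤ) = a (n+1) * Kk a (n+1) + Kk a n := by
      push_cast [Kk]; ring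
    rw [pow_succ]
    rw [h1, h2]
    nlinarith [ih]

lemma coprime_Hh_Kk (a : ℕ → ℕ) (n : ℕ) : Nat.Coprime (Hh a (n+1)) (Kk a (n+1)) := by
  have h := det_eq a n
  have : IsCoprime (Hh a (n+1) : ℤ) (Kk a (n+1) : ℤ) := by
    rcases Nat.even_or_odd (n+1) with he | ho
    · exact ⟨(Kk a n : ℤ), -(Hh a n : ℤ), by rw [he.neg_one_pow] at h; linarith⟩
    · exact ⟨-(Kk a n : ℤ), (Hh a n : ℤ), by rw [ho.neg_one_pow] at h; linarith⟩
  have := Int.isCoprime_iff_gcd_eq_one.mp this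
  simpa [Int.gcd, Int.natAbs_natCast] using this

/-- convergents as rationals -/
def convQ (a : ℕ → ℕ) (n : ℕ) : ℚ := (Hh a (n+1) : ℚ) / (Kk a (n+1) : ℚ)

/-- convergents as reals -/
def conv (a : ℕ → ℕ) (n : ℕ) : ℝ := (Hh a (n+1) : ℝ) / (Kk a (n+1) : ℝ)

lemma conv_eq_cast (a : ℕ → ℕ) (n : ℕ) : ((convQ a n : ℚ) : ℝ) = conv a n := by
  simp [convQ, conv]

lemma convQ_succ (ha : ∀ n, 1 ≤ a n) (n : ℕ) :
    convQ a (n+1) = a 0 + (convQ (sh a) n)⁻¹ := by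
  have hK : Kk a (n+2) = Hh (sh a) (n+1) := Kk_shift a (n+1)
  have hH : Hh a (n+2) = a 0 * Hh (sh a) (n+1) + Kk (sh a) (n+1) := Hh_shift a (n+1)
  have hsh : ∀ m, 1 ≤ sh a m := fun m => ha (m+1)
  have h1 : (0:ℚ) < (Hh (sh a) (n+1) : ℚ) := by exact_mod_cast Hh_pos hsh (n+1)
  have h2 : (0:ℚ) < (Kk (sh a) (n+1) : ℚ) := by exact_mod_cast Kk_pos hsh n
  rw [convQ, convQ, hK, hH]
  rw [inv_div]
  push_cast
  field_simp

lemma conv_succ (ha : ∀ n, 1 ≤ a n) (n : ℕ) :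
    conv a (n+1) = a 0 + (conv (sh a) n)⁻¹ := by
  have := convQ_succ ha (n := n)
  have h := congrArg (fun q : ℚ => (q : ℝ)) this
  simpa [conv_eq_cast] using h

lemma conv_ge_one (ha : ∀ n, 1 ≤ a n) (n : ℕ) : 1 ≤ conv a n := by
  have hHK : Kk a (n+1) ≤ Hh a (n+1) := by
    induction n using Nat.twoStepInduction with
    | zero => simpa [Hh, Kk] using ha 0
    | one =>
      show a 1 * Kk a 1 + Kk a 0 ≤ a 1 * Hh a 1 + Hh a 0
      simp [Hh, Kk]
      nlinarith [ha 0, ha 1]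
    | more n ih1 ih2 =>
      show a (n+2) * Kk a (n+2) + Kk a (n+1) ≤ a (n+2) * Hh a (n+2) + Hh a (n+1)
      have := ha (n+2)
      nlinarith
  have hK : (0:ℝ) < (Kk a (n+1) : ℝ) := by exact_mod_cast Kk_pos ha n
  rw [conv]
  rw [le_div_iff₀ hK]
  simpa using by exact_mod_cast hHK

lemma conv_le (ha : ∀ n, 1 ≤ a n) (n : ℕ) : conv a n ≤ a 0 + 1 := by
  cases n with
  | zero =>
    have : conv a 0 = a 0 := by simp [conv, Hh, Kk]
    rw [this]; linarith
  | succ n =>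
    rw [conv_succ ha]
    have h1 : 1 ≤ conv (sh a) n := conv_ge_one (fun m => ha (m+1)) n
    have : (conv (sh a) n)⁻¹ ≤ 1 := by
      rw [inv_le_one_iff₀]; right; exact h1
    linarith

lemma conv_pos (ha : ∀ n, 1 ≤ a n) (n : ℕ) : 0 < conv a n :=
  lt_of_lt_of_le one_pos (conv_ge_one ha n)

lemma dist_conv (ha : ∀ n, 1 ≤ a n) (n : ℕ) :
    |conv a (n+1) - conv a n| = 1 / ((Kk a (n+1) : ℝ) * (Kk a (n+2) : ℝ)) := by
  have hK1 : (0:ℝ) < (Kk a (n+1) : ℝ) := by exact_mod_cast Kk_pos ha n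
  have hK2 : (0:ℝ) < (Kk a (n+2) : ℝ) := by exact_mod_cast Kk_pos ha (n+1)
  have hdet : (Hh a (n+2) : ℤ) * Kk a (n+1) - Hh a (n+1) * Kk a (n+2) = (-1)^(n+2) :=
    det_eq a (n+1)
  have hcast : (Hh a (n+2) : ℝ) * Kk a (n+1) - Hh a (n+1) * Kk a (n+2) = (-1:ℝ)^(n+2) := by
    exact_mod_cast congrArg (fun z : ℤ => (z : ℝ)) hdet
  have : conv a (n+1) - conv a n
      = ((Hh a (n+2) : ℝ) * Kk a (n+1) - Hh a (n+1) * Kk a (n+2)) / (Kk a (n+1) * Kk a (n+2)) := by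
    rw [conv, conv]; field_simp
  rw [this, hcast, abs_div]
  rw [abs_pow, abs_neg, abs_one, one_pow]
  rw [abs_of_pos (by positivity)]

lemma dist_conv_le (ha : ∀ n, 1 ≤ a n) (n : ℕ) :
    dist (conv a n) (conv a (n+1)) ≤ 1 * (1/2) ^ n := by
  rw [Real.dist_eq, abs_sub_comm, dist_conv ha n]
  have h2 : (2:ℝ)^n ≤ (Kk a (n+1) : ℝ) * (Kk a (n+2) : ℝ) := by
    have := Kk_prod_ge ha n
    have := (Nat.cast_le (α := ℝ)).mpr this
    push_cast at this ⊢
    linarith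
  rw [one_mul, div_pow, one_pow, one_div, one_div]
  apply inv_anti₀ (by positivity) h2

lemma cauchy_conv (ha : ∀ n, 1 ≤ a n) : CauchySeq (conv a) :=
  cauchySeq_of_le_geometric (1/2) 1 (by norm_num) (dist_conv_le ha)

/-- the value of the continued fraction -/
def cfv (a : ℕ → ℕ) : ℝ := limUnder atTop (conv a)

lemma tendsto_cfv (ha : ∀ n, 1 ≤ a n) : Tendsto (conv a) atTop (𝓝 (cfv a)) :=
  (cauchy_conv ha).tendsto_limUnder

lemma cfv_ge_one (ha : ∀ n, 1 ≤ a n) : 1 ≤ cfv a :=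
  ge_of_tendsto (tendsto_cfv ha) (Eventually.of_forall (conv_ge_one ha))

lemma cfv_le (ha : ∀ n, 1 ≤ a n) : cfv a ≤ a 0 + 1 :=
  le_of_tendsto (tendsto_cfv ha) (Eventually.of_forall (conv_le ha))

lemma cfv_pos (ha : ∀ n, 1 ≤ a n) : 0 < cfv a := lt_of_lt_of_le one_pos (cfv_ge_one ha)

lemma cfv_eq (ha : ∀ n, 1 ≤ a n) : cfv a = a 0 + (cfv (sh a))⁻¹ := by
  have hsh : ∀ m, 1 ≤ sh a m := fun m => ha (m+1)
  have h1 : Tendsto (fun n => conv a (n+1)) atTop (𝓝 (cfv a)) :=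
    (tendsto_cfv ha).comp (tendsto_add_atTop_nat 1)
  have h2 : Tendsto (fun n => (a 0 : ℝ) + (conv (sh a) n)⁻¹) atTop
      (𝓝 ((a 0 : ℝ) + (cfv (sh a))⁻¹)) := by
    apply Tendsto.const_add
    exact ((tendsto_cfv hsh).inv₀ (ne_of_gt (cfv_pos hsh)))
  have : (fun n => conv a (n+1)) = fun n => (a 0 : ℝ) + (conv (sh a) n)⁻¹ := by
    funext n; exact conv_succ ha n
  rw [this] at h1
  exact tendsto_nhds_unique h1 h2

lemma cfv_gt_one (ha : ∀ n, 1 ≤ a n) : 1 < cfv (sh a) := by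
  have hsh : ∀ m, 1 ≤ sh a m := fun m => ha (m+1)
  have hshsh : ∀ m, 1 ≤ sh (sh a) m := fun m => ha (m+2)
  rw [cfv_eq hsh]
  have h1 : cfv (sh (sh a)) ≤ (sh a) 1 + 1 := cfv_le hshsh
  have h2 : 0 < cfv (sh (sh a)) := cfv_pos hshsh
  have h3 : (0:ℝ) < (sh a) 1 + 1 := by positivity
  have : (0:ℝ) < (cfv (sh (sh a)))⁻¹ := by positivity
  have h4 : (1:ℝ) ≤ ((sh a) 0 : ℝ) := by exact_mod_cast hsh 0
  linarith

/-- tail values -/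
def tl (a : ℕ → ℕ) (m : ℕ) : ℝ := cfv (sh^[m] a)

lemma sh_pos (ha : ∀ n, 1 ≤ a n) (m : ℕ) : ∀ n, 1 ≤ (sh^[m] a) n := by
  intro n; rw [sh_iterate]; exact ha _

lemma tl_eq (ha : ∀ n, 1 ≤ a n) (m : ℕ) : tl a m = a m + (tl a (m+1))⁻¹ := by
  have h := cfv_eq (a := sh^[m] a) (sh_pos ha m)
  have h0 : (sh^[m] a) 0 = a m := by rw [sh_iterate]; simp
  have h1 : sh (sh^[m] a) = sh^[m+1] a := (Function.iterate_succ_apply' sh m a).symm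
  rw [tl, h, h0, h1, tl]

lemma tl_ge_one (ha : ∀ n, 1 ≤ a n) (m : ℕ) : 1 ≤ tl a m := cfv_ge_one (sh_pos ha m)

lemma tl_pos (ha : ∀ n, 1 ≤ a n) (m : ℕ) : 0 < tl a m := cfv_pos (sh_pos ha m)

lemma tl_gt_one (ha : ∀ n, 1 ≤ a n) (m : ℕ) : 1 < tl a (m+1) := by
  have := cfv_gt_one (a := sh^[m] a) (sh_pos ha m)
  rw [(Function.iterate_succ_apply' sh m a).symm] at this
  exact this

/-- Möbius identity: x = (H_{m+1} t_{m+1} + H_m)/(K_{m+1} t_{m+1} + K_m), cross-multiplied. -/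
lemma moeb (ha : ∀ n, 1 ≤ a n) (m : ℕ) :
    cfv a * ((Kk a (m+1) : ℝ) * tl a (m+1) + (Kk a m : ℝ))
      = (Hh a (m+1) : ℝ) * tl a (m+1) + (Hh a m : ℝ) := by
  induction m with
  | zero =>
    have h1 : tl a 1 = cfv (sh a) := by rw [tl, Function.iterate_one]
    have h2 : cfv a = a 0 + (cfv (sh a))⁻¹ := cfv_eq ha
    have h3 : 0 < cfv (sh a) := cfv_pos (fun n => ha (n+1))
    simp only [Kk, Hh, Nat.cast_one, Nat.cast_zero, h1]
    rw [h2]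
    field_simp
    ring
  | succ m ih =>
    have ht : tl a (m+1) = a (m+1) + (tl a (m+2))⁻¹ := tl_eq ha (m+1)
    have ht2 : 0 < tl a (m+2) := tl_pos ha (m+2)
    have hH : (Hh a (m+2) : ℝ) = a (m+1) * Hh a (m+1) + Hh a m := by push_cast [Hh]; ring
    have hK : (Kk a (m+2) : ℝ) = a (m+1) * Kk a (m+1) + Kk a m := by push_cast [Kk]; ring
    rw [ht] at ih
    rw [hH, hK]
    have h := ih
    field_simp at h ⊢
    nlinarith [h]

/-- λ_m = t_{m+1} + K_m / K_{m+1} -/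
def lam (a : ℕ → ℕ) (m : ℕ) : ℝ := tl a (m+1) + (Kk a m : ℝ) / (Kk a (m+1) : ℝ)

lemma lam_pos (ha : ∀ n, 1 ≤ a n) (m : ℕ) : 0 < lam a m := by
  have h1 : 0 < tl a (m+1) := tl_pos ha (m+1)
  have h2 : (0:ℝ) ≤ (Kk a m : ℝ) := by positivity
  have h3 : (0:ℝ) < (Kk a (m+1) : ℝ) := by exact_mod_cast Kk_pos ha m
  have : (0:ℝ) ≤ (Kk a m : ℝ) / (Kk a (m+1) : ℝ) := by positivity
  rw [lam]; linarith

lemma lam_ge_one (ha : ∀ n, 1 ≤ a n) (m : ℕ) : 1 ≤ lam a m := by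
  have h1 : 1 ≤ tl a (m+1) := tl_ge_one ha (m+1)
  have h3 : (0:ℝ) < (Kk a (m+1) : ℝ) := by exact_mod_cast Kk_pos ha m
  have : (0:ℝ) ≤ (Kk a m : ℝ) / (Kk a (m+1) : ℝ) := by positivity
  rw [lam]; linarith

/-- error formula -/
lemma err_formula (ha : ∀ n, 1 ≤ a n) (m : ℕ) :
    |cfv a - conv a m| = 1 / ((Kk a (m+1) : ℝ)^2 * lam a m) := by
  have hK1 : (0:ℝ) < (Kk a (m+1) : ℝ) := by exact_mod_cast Kk_pos ha m
  have hK0 : (0:ℝ) ≤ (Kk a m : ℝ) := by positivity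
  have ht : 0 < tl a (m+1) := tl_pos ha (m+1)
  have hD : (0:ℝ) < (Kk a (m+1) : ℝ) * tl a (m+1) + (Kk a m : ℝ) := by positivity
  have hmoeb := moeb ha m
  have hdet : (Hh a (m+1) : ℝ) * Kk a m - Hh a m * Kk a (m+1) = (-1:ℝ)^(m+1) := by
    exact_mod_cast congrArg (fun z : ℤ => (z : ℝ)) (det_eq a m)
  set D : ℝ := (Kk a (m+1) : ℝ) * ((Kk a (m+1):ℝ) * tl a (m+1) + (Kk a m:ℝ)) with hDdef
  have hDpos : 0 < D := by rw [hDdef]; positivity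
  have key : (cfv a - conv a m) * D = (-1:ℝ)^(m+2) := by
    have expand : (cfv a - conv a m) * D
        = cfv a * ((Kk a (m+1):ℝ) * tl a (m+1) + (Kk a m:ℝ)) * (Kk a (m+1):ℝ)
          - (Hh a (m+1):ℝ) * ((Kk a (m+1):ℝ) * tl a (m+1) + (Kk a m:ℝ)) := by
      rw [hDdef, conv]; field_simp
    rw [expand, hmoeb]
    have hm2 : (-1:ℝ)^(m+2) = (-1)^(m+1) * (-1) := by ring
    rw [hm2, ← hdet]; ring
  have habs : |cfv a - conv a m| * D = 1 := by
    have h := congrArg abs key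
    rw [abs_mul, abs_of_pos hDpos, abs_pow, abs_neg, abs_one, one_pow] at h
    exact h
  have hlamD : (Kk a (m+1) : ℝ)^2 * lam a m = D := by rw [hDdef, lam]; field_simp
  rw [hlamD, eq_div_iff (ne_of_gt hDpos)]
  exact habs

lemma cfv_ne_conv (ha : ∀ n, 1 ≤ a n) (m : ℕ) : cfv a ≠ conv a m := by
  intro h
  have := err_formula ha m
  rw [h, sub_self, abs_zero] at this
  have hK1 : (0:ℝ) < (Kk a (m+1) : ℝ) := by exact_mod_cast Kk_pos ha m
  have := lam_pos ha m
  have : (0:ℝ) < 1 / ((Kk a (m+1) : ℝ)^2 * lam a m) := by positivity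
  linarith

lemma err_lt (ha : ∀ n, 1 ≤ a n) (m : ℕ) :
    |cfv a - conv a m| < 1 / ((Kk a (m+1) : ℝ) * (Kk a (m+2) : ℝ)) := by
  rw [err_formula ha m]
  have hK1 : (0:ℝ) < (Kk a (m+1) : ℝ) := by exact_mod_cast Kk_pos ha m
  have hK2 : (0:ℝ) < (Kk a (m+2) : ℝ) := by exact_mod_cast Kk_pos ha (m+1)
  have hK0 : (0:ℝ) ≤ (Kk a m : ℝ) := by positivity
  apply div_lt_div_of_pos_left one_pos (by positivity)
  have hlam : (Kk a (m+1) : ℝ)^2 * lam a m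
      = (Kk a (m+1) : ℝ) * ((Kk a (m+1) : ℝ) * tl a (m+1) + (Kk a m : ℝ)) := by
    rw [lam]; field_simp
  rw [hlam]
  apply mul_lt_mul_of_pos_left _ hK1
  have hKrec : (Kk a (m+2) : ℝ) = a (m+1) * Kk a (m+1) + Kk a m := by push_cast [Kk]; ring
  rw [hKrec]
  have htgt : (a (m+1) : ℝ) < tl a (m+1) := by
    have := tl_eq ha (m+1)
    have h2 : 0 < tl a (m+2) := tl_pos ha (m+2)
    have : tl a (m+1) = a (m+1) + (tl a (m+2))⁻¹ := this
    have hp : (0:ℝ) < (tl a (m+2))⁻¹ := by positivity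
    linarith
  nlinarith

lemma ne_rat_aux (ha : ∀ n, 1 ≤ a n) (A B : ℤ) (hB : 0 < B) : cfv a ≠ A / B := by
  intro h
  -- choose m with Kk a (m+2) > B
  obtain ⟨m, hm⟩ : ∃ m, (B:ℝ) < (Kk a (m+2) : ℝ) := by
    obtain ⟨m, hm⟩ := pow_unbounded_of_one_lt (B:ℝ) (by norm_num : (1:ℝ) < 2)
    refine ⟨2*m, ?_⟩
    have h1 : (2:ℝ)^(2*m) ≤ (Kk a (2*m+1) : ℝ) * (Kk a (2*m+2) : ℝ) := by
      exact_mod_cast Kk_prod_ge ha (2*m)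
    have h2 : (Kk a (2*m+1) : ℝ) ≤ (Kk a (2*m+2) : ℝ) := by
      exact_mod_cast Kk_mono ha (2*m)
    have h3 : (0:ℝ) < (Kk a (2*m+1) : ℝ) := by exact_mod_cast Kk_pos ha (2*m)
    have hpow : (2:ℝ)^(2*m) = 2^m * 2^m := by rw [two_mul, pow_add]
    have e1 : (Kk a (2*m+1):ℝ) * (Kk a (2*m+2):ℝ)
        ≤ (Kk a (2*m+2):ℝ) * (Kk a (2*m+2):ℝ) :=
      mul_le_mul_of_nonneg_right h2 (by positivity)
    have hBK : (2:ℝ)^m ≤ (Kk a (2*m+2):ℝ) := by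
      nlinarith [sq_nonneg ((2:ℝ)^m - (Kk a (2*m+2):ℝ)), h1, e1]
    linarith
  have hK1 : (0:ℝ) < (Kk a (m+1) : ℝ) := by exact_mod_cast Kk_pos ha m
  have hK2 : (0:ℝ) < (Kk a (m+2) : ℝ) := by exact_mod_cast Kk_pos ha (m+1)
  have hBpos : (0:ℝ) < (B:ℝ) := by exact_mod_cast hB
  have hne := cfv_ne_conv ha m
  have herr := err_lt ha m
  rw [h] at herr hne
  -- |A/B - H/K| ≥ 1/(B K)
  have hZ : (A * Kk a (m+1) - B * Hh a (m+1) : ℤ) ≠ 0 := by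
    intro h0
    apply hne
    rw [conv]
    rw [div_eq_div_iff (ne_of_gt hBpos) (ne_of_gt hK1)]
    have : (A:ℝ) * Kk a (m+1) - (B:ℝ) * Hh a (m+1) = 0 := by exact_mod_cast h0
    linarith
  have h1le : (1:ℝ) ≤ |((A * Kk a (m+1) - B * Hh a (m+1) : ℤ) : ℝ)| := by
    rw [← Int.cast_abs]
    exact_mod_cast Int.one_le_abs hZ
  have hlow : 1 / ((B:ℝ) * (Kk a (m+1) : ℝ)) ≤ |(A:ℝ)/B - conv a m| := by
    have hnum : (A:ℝ)/B - conv a m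
        = ((A * Kk a (m+1) - B * Hh a (m+1) : ℤ) : ℝ) / ((B:ℝ) * (Kk a (m+1):ℝ)) := by
      rw [conv]
      push_cast
      rw [div_sub_div _ _ (ne_of_gt hBpos) (ne_of_gt hK1)]
    rw [hnum, abs_div, abs_of_pos (show (0:ℝ) < (B:ℝ) * (Kk a (m+1):ℝ) by positivity)]
    gcongr
  have hcomb : 1 / ((B:ℝ) * (Kk a (m+1) : ℝ)) < 1 / ((Kk a (m+1) : ℝ) * (Kk a (m+2) : ℝ)) :=
    lt_of_le_of_lt hlow herr
  rw [div_lt_div_iff₀ (by positivity) (by positivity)] at hcomb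
  nlinarith

lemma irrational_cfv (ha : ∀ n, 1 ≤ a n) : Irrational (cfv a) := by
  rw [irrational_iff_ne_rational]
  intro A B _
  rcases lt_trichotomy B 0 with hB | hB | hB
  · intro h
    apply ne_rat_aux ha (-A) (-B) (by linarith)
    rw [h]
    push_cast
    rw [neg_div_neg_eq]
  · intro h
    rw [hB] at h
    norm_num at h
    have := cfv_ge_one ha
    rw [h] at this
    linarith
  · exact ne_rat_aux ha A B hB

lemma floor_cfv (ha : ∀ n, 1 ≤ a n) : ⌊cfv a⌋ = (a 0 : ℤ) := by
  have h := cfv_eq ha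
  have h1 : 1 < cfv (sh a) := cfv_gt_one ha
  have h2 : (cfv (sh a))⁻¹ < 1 := by
    rw [inv_lt_one_iff₀]; right; exact h1
  have h3 : 0 < (cfv (sh a))⁻¹ := by positivity
  rw [Int.floor_eq_iff]
  constructor
  · push_cast; linarith
  · push_cast; linarith

lemma fract_cfv (ha : ∀ n, 1 ≤ a n) : Int.fract (cfv a) = (cfv (sh a))⁻¹ := by
  rw [Int.fract, floor_cfv ha, cfv_eq ha]
  push_cast
  ring

lemma convergent_eq (n : ℕ) : ∀ (a : ℕ → ℕ), (∀ m, 1 ≤ a m) →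
    Real.convergent (cfv a) n = convQ a n := by
  induction n with
  | zero =>
    intro a ha
    rw [Real.convergent_zero, floor_cfv ha]
    simp [convQ, Hh, Kk]
  | succ n ih =>
    intro a ha
    rw [Real.convergent_succ, floor_cfv ha, fract_cfv ha, inv_inv]
    rw [ih (sh a) (fun m => ha (m+1))]
    rw [convQ_succ ha]
    push_cast
    ring

lemma den_convQ (ha : ∀ n, 1 ≤ a n) (n : ℕ) : (convQ a n).den = Kk a (n+1) := by
  have hco : Nat.Coprime (Hh a (n+1)) (Kk a (n+1)) := coprime_Hh_Kk a n
  have hKpos : 0 < (Kk a (n+1) : ℤ) := by exact_mod_cast Kk_pos ha n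
  have h : ((convQ a n).den : ℤ) = (Kk a (n+1) : ℤ) := by
    rw [convQ]
    have : ((Hh a (n+1) : ℚ)) / ((Kk a (n+1) : ℚ))
        = ((Hh a (n+1) : ℤ) : ℚ) / ((Kk a (n+1) : ℤ) : ℚ) := by push_cast; ring
    rw [this]
    apply Rat.den_div_eq_of_coprime hKpos
    simpa [Int.natAbs_natCast] using hco
  exact_mod_cast h

/-- membership of convergents in `diophSols` is equivalent to `lam > c` -/
lemma convQ_mem_sols_iff (ha : ∀ n, 1 ≤ a n) {c : ℝ} (hc : 0 < c) (m : ℕ) :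
    convQ a m ∈ diophSols c (cfv a) ↔ c < lam a m := by
  have hden := den_convQ ha m
  have hK1 : (0:ℝ) < (Kk a (m+1) : ℝ) := by exact_mod_cast Kk_pos ha m
  have hlam := lam_pos ha m
  have : ((convQ a m : ℚ) : ℝ) = conv a m := conv_eq_cast a m
  rw [diophSols, Set.mem_setOf_eq, this, hden, err_formula ha m]
  rw [div_lt_div_iff₀ (by positivity) (by positivity)]
  have hKsq : (0:ℝ) < (Kk a (m+1):ℝ)^2 := by positivity
  constructor
  · intro h
    nlinarith [mul_pos hc hKsq, mul_pos hlam hKsq]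
  · intro h
    nlinarith [mul_pos (sub_pos.mpr h) hKsq]

lemma sols_subset (ha : ∀ n, 1 ≤ a n) {c : ℝ} (hc : 2 ≤ c) :
    diophSols c (cfv a) ⊆ (fun m => convQ a m) '' {m | c < lam a m} := by
  intro r hr
  rw [diophSols, Set.mem_setOf_eq] at hr
  have hden : (0:ℝ) < (r.den : ℝ) := by exact_mod_cast r.pos
  have h2 : |cfv a - r| < 1 / (2 * (r.den:ℝ)^2) := by
    apply lt_of_lt_of_le hr
    apply div_le_div_of_nonneg_left one_pos.le (by positivity)
    nlinarith
  obtain ⟨n, hn⟩ := Real.exists_rat_eq_convergent (ξ := cfv a) h2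
  rw [convergent_eq n a ha] at hn
  rw [hn] at hr
  have hc0 : (0:ℝ) < c := by linarith
  exact ⟨n, (convQ_mem_sols_iff ha hc0 n).mp hr, hn.symm⟩

/-! ### golden ratio and the contraction `g t = 1 + 1/t` -/

def gr : ℝ := (1 + Real.sqrt 5) / 2

lemma sqrt5_sq : Real.sqrt 5 ^ 2 = 5 := Real.sq_sqrt (by norm_num)

lemma sqrt5_lt : Real.sqrt 5 < 2.2361 := by
  nlinarith [sqrt5_sq, Real.sqrt_nonneg 5]

lemma sqrt5_gt : 2.2360 < Real.sqrt 5 := by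
  nlinarith [sqrt5_sq, Real.sqrt_nonneg 5]

lemma gr_mem : 8/5 ≤ gr ∧ gr ≤ 17/10 := by
  constructor <;> (rw [gr]; nlinarith [sqrt5_gt, sqrt5_lt])

lemma gr_pos : 0 < gr := by nlinarith [gr_mem.1]

lemma gr_sq : gr ^ 2 = gr + 1 := by
  rw [gr]; nlinarith [sqrt5_sq]

def gmap (t : ℝ) : ℝ := 1 + 1 / t

lemma gmap_gr : gmap gr = gr := by
  rw [gmap]
  have h1 : gr ≠ 0 := ne_of_gt gr_pos
  field_simp
  nlinarith [gr_sq]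

lemma gmap_mem {t : ℝ} (h : 4/3 ≤ t) (h2 : t ≤ 3) : 4/3 ≤ gmap t ∧ gmap t ≤ 3 := by
  have ht : 0 < t := by linarith
  constructor
  · rw [gmap]
    have h3 : (1:ℝ)/3 ≤ 1/t := by
      rw [div_le_div_iff₀ (by norm_num) ht]
      linarith
    linarith
  · rw [gmap]
    have : 1/t ≤ 3/4 := by
      rw [div_le_div_iff₀ ht (by norm_num)]
      linarith
    linarith

lemma gmap_contract {s t : ℝ} (hs : 4/3 ≤ s) (ht : 4/3 ≤ t) :
    |gmap s - gmap t| ≤ (9/16) * |s - t| := by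
  have hs0 : 0 < s := by linarith
  have ht0 : 0 < t := by linarith
  have key : gmap s - gmap t = (t - s) / (s * t) := by
    rw [gmap, gmap]; field_simp; ring
  rw [key, abs_div, abs_of_pos (mul_pos hs0 ht0), abs_sub_comm t s,
    div_le_iff₀ (mul_pos hs0 ht0)]
  have h1 : (16:ℝ)/9 ≤ s * t := by nlinarith
  nlinarith [mul_le_mul_of_nonneg_left h1 (abs_nonneg (s - t))]

lemma gmap_iter_bound {t : ℝ} (h1 : 4/3 ≤ t) (h2 : t ≤ 3) (n : ℕ) :
    (4/3 ≤ gmap^[n] t ∧ gmap^[n] t ≤ 3) ∧ |gmap^[n] t - gr| ≤ 2 * (9/16)^n := by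
  induction n with
  | zero =>
    refine ⟨⟨h1, h2⟩, ?_⟩
    simp only [Function.iterate_zero, id_eq, pow_zero, mul_one]
    rw [abs_le]
    constructor <;> nlinarith [gr_mem.1, gr_mem.2]
  | succ n ih =>
    obtain ⟨⟨ih1, ih2⟩, ih3⟩ := ih
    rw [Function.iterate_succ_apply']
    refine ⟨gmap_mem ih1 ih2, ?_⟩
    calc |gmap (gmap^[n] t) - gr| = |gmap (gmap^[n] t) - gmap gr| := by rw [gmap_gr]
    _ ≤ (9/16) * |gmap^[n] t - gr| := gmap_contract ih1 (by nlinarith [gr_mem.1])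
    _ ≤ (9/16) * (2 * (9/16)^n) := by nlinarith [ih3]
    _ = 2 * (9/16)^(n+1) := by ring

/-- inverse comparison helper -/
lemma inv_diff_bound {s t : ℝ} (hs : 4/3 ≤ s) (ht : 4/3 ≤ t) :
    |1/s - 1/t| ≤ (9/16) * |s - t| := by
  have h := gmap_contract hs ht
  have : gmap s - gmap t = 1/s - 1/t := by rw [gmap, gmap]; ring
  rwa [this] at h

/-! ### the specific word `1^{i+3} 2 2 1^{i+4} 2 2 ...` -/

def wrd : ℕ → ℕ → ℕ
  | i, n =>
    if n < i + 3 then 1 else if n < i + 5 then 2 else wrd (i+1) (n - (i+5))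
  termination_by i n => n
  decreasing_by omega

lemma wrd_one {i j : ℕ} (h : j < i + 3) : wrd i j = 1 := by
  rw [wrd, if_pos h]

lemma wrd_two1 (i : ℕ) : wrd i (i + 3) = 2 := by
  rw [wrd, if_neg (by omega), if_pos (by omega)]

lemma wrd_two2 (i : ℕ) : wrd i (i + 4) = 2 := by
  rw [wrd, if_neg (by omega), if_pos (by omega)]

lemma wrd_shift (i n : ℕ) : wrd i (n + (i + 5)) = wrd (i+1) n := by
  rw [wrd, if_neg (by omega), if_neg (by omega)]
  congr 1
  omega

lemma wrd_bounds (n : ℕ) : ∀ i, 1 ≤ wrd i n ∧ wrd i n ≤ 2 := by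
  induction n using Nat.strong_induction_on with
  | _ n ih =>
    intro i
    rw [wrd]
    split
    · omega
    · split
      · omega
      · exact ih _ (by omega) (i+1)

lemma wrd_pos (i n : ℕ) : 1 ≤ wrd i n := (wrd_bounds n i).1
lemma wrd_le (i n : ℕ) : wrd i n ≤ 2 := (wrd_bounds n i).2

lemma sh_wrd (i : ℕ) : sh^[i+5] (wrd i) = wrd (i+1) := by
  funext n
  rw [sh_iterate]
  exact wrd_shift i n

/-- cumulative block lengths -/
def Eb : ℕ → ℕ
  | 0 => 0
  | i + 1 => Eb i + (i + 5)

lemma Eb_lt (i : ℕ) : Eb i < Eb (i+1) := by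
  show Eb i < Eb i + (i+5); omega

lemma Eb_ge (i : ℕ) : i ≤ Eb i := by
  induction i with
  | zero => simp [Eb]
  | succ i ih => show i + 1 ≤ Eb i + (i+5); omega

lemma Eb_mono : StrictMono Eb := strictMono_nat_of_lt_succ Eb_lt

lemma Eb_decomp (N : ℕ) : ∃ i, Eb i ≤ N ∧ N < Eb (i+1) := by
  induction N with
  | zero => exact ⟨0, le_refl 0, by simp [Eb]⟩
  | succ N ih =>
    obtain ⟨i, h1, h2⟩ := ih
    rcases Nat.lt_or_ge (N+1) (Eb (i+1)) with h | h
    · exact ⟨i, by omega, h⟩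
    · have : N + 1 = Eb (i+1) := by omega
      exact ⟨i+1, by omega, by rw [this]; exact Eb_lt (i+1)⟩

section Words

variable {a : ℕ → ℕ} {L : ℕ}

lemma sh_L (hL : ∀ n, a (n + L) = wrd 0 n) : sh^[L] a = wrd 0 := by
  funext n; rw [sh_iterate]; exact hL n

lemma sh_Eb (hL : ∀ n, a (n + L) = wrd 0 n) (i : ℕ) : sh^[L + Eb i] a = wrd i := by
  induction i with
  | zero => simpa [Eb] using sh_L hL
  | succ i ih =>
    have harith : L + Eb (i+1) = (i+5) + (L + Eb i) := by show L + (Eb i + (i+5)) = _; omega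
    rw [harith, Function.iterate_add_apply, ih, sh_wrd]

lemma aval (hL : ∀ n, a (n + L) = wrd 0 n) (i j : ℕ) : a (L + Eb i + j) = wrd i j := by
  have := congrFun (sh_Eb hL i) j
  rw [sh_iterate] at this
  rw [← this]
  congr 1
  omega

lemma a_le_two (ha : ∀ n, 1 ≤ a n) (hL : ∀ n, a (n + L) = wrd 0 n) {n : ℕ} (h : L ≤ n) :
    a n ≤ 2 := by
  have : a n = wrd 0 (n - L) := by rw [← hL (n - L)]; congr 1; omega
  rw [this]; exact wrd_le 0 (n - L)

end Words

/-! ### cfv bounds for words with entries in {1,2} -/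

lemma cfv12_mem {b : ℕ → ℕ} (h1 : ∀ n, 1 ≤ b n) (h2 : ∀ n, b n ≤ 2) :
    4/3 ≤ cfv b ∧ cfv b ≤ 3 := by
  have hsh : ∀ n, 1 ≤ sh b n := fun n => h1 (n+1)
  have e := cfv_eq h1
  have l1 : 1 ≤ cfv (sh b) := cfv_ge_one hsh
  have l2 : cfv (sh b) ≤ 3 := le_trans (cfv_le hsh) (by
    have := h2 1
    have : ((sh b) 0 : ℝ) ≤ 2 := by exact_mod_cast h2 1
    linarith)
  have hb0l : (1:ℝ) ≤ (b 0 : ℝ) := by exact_mod_cast h1 0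
  have hb0u : (b 0 : ℝ) ≤ 2 := by exact_mod_cast h2 0
  have hpos : 0 < cfv (sh b) := by linarith
  have i1 : (cfv (sh b))⁻¹ ≤ 1 := by rw [inv_le_one_iff₀]; right; linarith
  have i2 : (1:ℝ)/3 ≤ (cfv (sh b))⁻¹ := by
    rw [div_le_iff₀ (by norm_num), ← one_div, div_mul_eq_mul_div, le_div_iff₀ hpos]
    linarith
  constructor
  · rw [e]; linarith
  · rw [e]; linarith

lemma cfv_gmap {b : ℕ → ℕ} (h1 : ∀ n, 1 ≤ b n) (hb0 : b 0 = 1) :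
    cfv b = gmap (cfv (sh b)) := by
  rw [cfv_eq h1, hb0, gmap, one_div]
  norm_num

lemma cfv_gmap_iter (j : ℕ) : ∀ (b : ℕ → ℕ), (∀ n, 1 ≤ b n) → (∀ k, k < j → b k = 1) →
    cfv b = gmap^[j] (cfv (sh^[j] b)) := by
  induction j with
  | zero => intro b _ _; simp
  | succ j ih =>
    intro b h1 hk
    rw [cfv_gmap h1 (hk 0 (by omega))]
    rw [ih (sh b) (fun n => h1 (n+1)) (fun k hkj => hk (k+1) (by omega))]
    rw [← Function.iterate_succ_apply' gmap j, ← Function.iterate_succ_apply sh j]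

/-! ### rho: ratios of denominators -/

def rho (a : ℕ → ℕ) (m : ℕ) : ℝ := (Kk a (m+1) : ℝ) / (Kk a m : ℝ)

lemma rho_pos (ha : ∀ n, 1 ≤ a n) {m : ℕ} (hm : 1 ≤ m) : 0 < rho a m := by
  obtain ⟨m', rfl⟩ := Nat.exists_eq_add_of_le hm
  have h1 : (0:ℝ) < (Kk a (1 + m') : ℝ) := by
    have := Kk_pos ha m'
    have : 1 ≤ Kk a (m' + 1) := this
    rw [Nat.add_comm 1 m']
    exact_mod_cast this
  have h2 : (0:ℝ) < (Kk a (1 + m' + 1) : ℝ) := by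
    have := Kk_pos ha (m' + 1)
    rw [show 1 + m' + 1 = m' + 1 + 1 from by omega]
    exact_mod_cast this
  exact div_pos h2 h1

lemma rho_ge_one (ha : ∀ n, 1 ≤ a n) {m : ℕ} (hm : 1 ≤ m) : 1 ≤ rho a m := by
  obtain ⟨m', rfl⟩ := Nat.exists_eq_add_of_le hm
  rw [rho]
  have h1 : (0:ℝ) < (Kk a (1 + m') : ℝ) := by
    have : 1 ≤ Kk a (m' + 1) := Kk_pos ha m'
    rw [Nat.add_comm 1 m']; exact_mod_cast this
  rw [le_div_iff₀ h1, one_mul]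
  have := Kk_mono ha m'
  rw [show 1 + m' + 1 = m' + 2 from by omega, show 1 + m' = m' + 1 from by omega]
  exact_mod_cast this

lemma rho_rec (ha : ∀ n, 1 ≤ a n) {m : ℕ} (hm : 1 ≤ m) :
    rho a (m+1) = (a (m+1) : ℝ) + 1 / rho a m := by
  obtain ⟨m', rfl⟩ := Nat.exists_eq_add_of_le hm
  rw [show 1 + m' = m' + 1 from by omega] at *
  have hK0 : (0:ℝ) < (Kk a (m'+1) : ℝ) := by exact_mod_cast Kk_pos ha m'
  have hK1 : (0:ℝ) < (Kk a (m'+2) : ℝ) := by exact_mod_cast Kk_pos ha (m'+1)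
  have hrec : (Kk a (m'+3) : ℝ) = (a (m'+2) : ℝ) * (Kk a (m'+2):ℝ) + (Kk a (m'+1):ℝ) := by
    push_cast [Kk]; ring
  rw [rho, rho, hrec]
  rw [one_div_div]
  field_simp

lemma rho_le_three (ha : ∀ n, 1 ≤ a n) {m : ℕ} (hm : 2 ≤ m) (h2 : a m ≤ 2) :
    rho a m ≤ 3 := by
  obtain ⟨m', rfl⟩ := Nat.exists_eq_add_of_le hm
  rw [show 2 + m' = (m' + 1) + 1 from by omega] at *
  rw [rho_rec ha (by omega)]
  have hr1 : 1 ≤ rho a (m'+1) := rho_ge_one ha (by omega)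
  have ha2 : (a (m'+1+1) : ℝ) ≤ 2 := by exact_mod_cast h2
  have : 1 / rho a (m'+1) ≤ 1 := by
    rw [div_le_one (by linarith)]; linarith
  linarith

lemma rho_ge_43 (ha : ∀ n, 1 ≤ a n) {m : ℕ} (hm : 2 ≤ m) (h3 : rho a (m-1) ≤ 3) :
    4/3 ≤ rho a m := by
  obtain ⟨m', rfl⟩ := Nat.exists_eq_add_of_le hm
  rw [show 2 + m' = (m' + 1) + 1 from by omega] at *
  rw [rho_rec ha (by omega)]
  have h3' : rho a (m'+1) ≤ 3 := by
    rw [show m' + 1 + 1 - 1 = m' + 1 from by omega] at h3; exact h3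
  have hr0 : 0 < rho a (m'+1) := rho_pos ha (by omega)
  have ha1 : (1:ℝ) ≤ (a (m'+1+1) : ℝ) := by exact_mod_cast ha (m'+1+1)
  have : (1:ℝ)/3 ≤ 1 / rho a (m'+1) := by
    rw [div_le_div_iff₀ (by norm_num) hr0]; linarith
  linarith

lemma rho_gmap (ha : ∀ n, 1 ≤ a n) {m : ℕ} (hm : 1 ≤ m) (h1 : a (m+1) = 1) :
    rho a (m+1) = gmap (rho a m) := by
  rw [rho_rec ha hm, h1, gmap]
  norm_num

lemma rho_gmap_iter (ha : ∀ n, 1 ≤ a n) {m : ℕ} (hm : 1 ≤ m) (j : ℕ)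
    (h1 : ∀ k, k < j → a (m + 1 + k) = 1) :
    rho a (m + j) = gmap^[j] (rho a m) := by
  induction j with
  | zero => simp
  | succ j ih =>
    rw [show m + (j+1) = (m + j) + 1 from by omega]
    rw [rho_gmap ha (by omega) (by rw [show m+j+1 = m+1+j from by omega]; exact h1 j (by omega))]
    rw [ih (fun k hk => h1 k (by omega))]
    rw [← Function.iterate_succ_apply' gmap j]

/-! ### lambda estimates for prefixed block words -/

lemma gr_inv : 1/gr = gr - 1 := by
  rw [div_eq_iff (ne_of_gt gr_pos)]
  linear_combination -gr_sq

lemma gr_identity : (2 + 1/gr) + 1/(2 + 1/gr) = 3 := by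
  have e1 : 2 + 1/gr = gr + 1 := by rw [gr_inv]; ring
  have e2 : 1/(gr + 1) = 2 - gr := by
    rw [div_eq_iff (ne_of_gt (by nlinarith [gr_pos] : (0:ℝ) < gr + 1))]
    linear_combination gr_sq
  rw [e1, e2]
  ring

lemma gr_ge : 4/3 ≤ gr := by nlinarith [gr_mem.1]

lemma close3 {u v δ : ℝ} (hu : 4/3 ≤ u) (hv : 4/3 ≤ v)
    (h1 : |u - gr| ≤ δ) (h2 : |v - gr| ≤ δ) :
    |((2 + 1/u) + 1/(2 + 1/v)) - 3| ≤ δ ∧ |((2 + 1/(2 + 1/u)) + 1/v) - 3| ≤ δ := by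
  have hδ : 0 ≤ δ := le_trans (abs_nonneg _) h1
  have e1 : |1/u - 1/gr| ≤ (9/16) * δ := by
    have := inv_diff_bound hu gr_ge
    nlinarith [this, h1]
  have e1' : |1/v - 1/gr| ≤ (9/16) * δ := by
    have := inv_diff_bound hv gr_ge
    nlinarith [this, h2]
  have hv2 : (4:ℝ)/3 ≤ 2 + 1/v := by
    have h := one_div_pos.mpr (show (0:ℝ) < v by linarith)
    linarith
  have hu2 : (4:ℝ)/3 ≤ 2 + 1/u := by
    have h := one_div_pos.mpr (show (0:ℝ) < u by linarith)
    linarith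
  have hg2 : (4:ℝ)/3 ≤ 2 + 1/gr := by
    have h := one_div_pos.mpr gr_pos
    linarith
  have e2 : |1/(2 + 1/v) - 1/(2 + 1/gr)| ≤ (9/16) * ((9/16) * δ) := by
    have h := inv_diff_bound hv2 hg2
    have harg : |(2 + 1/v) - (2 + 1/gr)| = |1/v - 1/gr| := by
      congr 1; ring
    rw [harg] at h
    nlinarith [e1']
  have e2' : |1/(2 + 1/u) - 1/(2 + 1/gr)| ≤ (9/16) * ((9/16) * δ) := by
    have h := inv_diff_bound hu2 hg2
    have harg : |(2 + 1/u) - (2 + 1/gr)| = |1/u - 1/gr| := by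
      congr 1; ring
    rw [harg] at h
    nlinarith [e2, e1]
  constructor
  · have harg : ((2 + 1/u) + 1/(2 + 1/v)) - 3
        = (1/u - 1/gr) + (1/(2 + 1/v) - 1/(2 + 1/gr)) := by
      rw [← gr_identity]; ring
    rw [harg]
    calc |(1/u - 1/gr) + (1/(2 + 1/v) - 1/(2 + 1/gr))|
        ≤ |1/u - 1/gr| + |1/(2 + 1/v) - 1/(2 + 1/gr)| := abs_add_le _ _
      _ ≤ (9/16) * δ + (9/16) * ((9/16) * δ) := add_le_add e1 e2
      _ ≤ δ := by nlinarith
  · have harg : ((2 + 1/(2 + 1/u)) + 1/v) - 3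
        = (1/(2 + 1/u) - 1/(2 + 1/gr)) + (1/v - 1/gr) := by
      rw [← gr_identity]; ring
    rw [harg]
    calc |(1/(2 + 1/u) - 1/(2 + 1/gr)) + (1/v - 1/gr)|
        ≤ |1/(2 + 1/u) - 1/(2 + 1/gr)| + |1/v - 1/gr| := abs_add_le _ _
      _ ≤ (9/16) * ((9/16) * δ) + (9/16) * δ := add_le_add e2' e1'
      _ ≤ δ := by nlinarith

section Estimates

variable {a : ℕ → ℕ} {L : ℕ} (ha : ∀ n, 1 ≤ a n) (hL : ∀ n, a (n + L) = wrd 0 n)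

include ha hL

lemma tail_at (i j : ℕ) : sh^[L + Eb i + j] a = sh^[j] (wrd i) := by
  rw [show L + Eb i + j = j + (L + Eb i) from by omega, Function.iterate_add_apply,
    sh_Eb hL]

lemma lam_rho (m : ℕ) (hm : 1 ≤ m) : lam a m = tl a (m+1) + 1 / rho a m := by
  rw [lam, rho, one_div_div]

/-- `A i` estimate: value of `wrd i` -/
lemma cfv_wrd_close (i : ℕ) : |cfv (wrd i) - gr| ≤ 2 * (9/16)^(i+3)
    ∧ 4/3 ≤ cfv (wrd i) ∧ cfv (wrd i) ≤ 3 := by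
  have h1 : ∀ n, 1 ≤ wrd i n := wrd_pos i
  have hiter := cfv_gmap_iter (i+3) (wrd i) h1 (fun k hk => wrd_one hk)
  have htail12 : 4/3 ≤ cfv (sh^[i+3] (wrd i)) ∧ cfv (sh^[i+3] (wrd i)) ≤ 3 := by
    apply cfv12_mem
    · intro n; rw [sh_iterate]; exact wrd_pos i _
    · intro n; rw [sh_iterate]; exact wrd_le i _
  have := gmap_iter_bound htail12.1 htail12.2 (i+3)
  refine ⟨?_, ?_, ?_⟩
  · rw [hiter]; exact this.2
  · rw [hiter]; exact this.1.1
  · rw [hiter]; exact this.1.2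

/-- tail value at the second `2` of block `i` -/
lemma tl_second (i : ℕ) :
    tl a (L + Eb i + i + 4) = 2 + 1/(cfv (wrd (i+1))) := by
  have h : tl a (L + Eb i + i + 4) = cfv (sh^[i+4] (wrd i)) := by
    rw [tl, show L + Eb i + i + 4 = L + Eb i + (i+4) from by omega, tail_at ha hL]
  rw [h]
  have hpos : ∀ n, 1 ≤ (sh^[i+4] (wrd i)) n := by
    intro n; rw [sh_iterate]; exact wrd_pos i _
  rw [cfv_eq hpos]
  have h0 : (sh^[i+4] (wrd i)) 0 = 2 := by rw [sh_iterate]; simpa using wrd_two2 i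
  have hsh : sh (sh^[i+4] (wrd i)) = wrd (i+1) := by
    rw [← Function.iterate_succ_apply' sh (i+4), sh_wrd]
  rw [h0, hsh, one_div]
  norm_num

/-- tail value at the first `2` of block `i` -/
lemma tl_first (i : ℕ) :
    tl a (L + Eb i + i + 3) = 2 + 1/(2 + 1/(cfv (wrd (i+1)))) := by
  have h : tl a (L + Eb i + i + 3) = cfv (sh^[i+3] (wrd i)) := by
    rw [tl, show L + Eb i + i + 3 = L + Eb i + (i+3) from by omega, tail_at ha hL]
  rw [h]
  have hpos : ∀ n, 1 ≤ (sh^[i+3] (wrd i)) n := by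
    intro n; rw [sh_iterate]; exact wrd_pos i _
  rw [cfv_eq hpos]
  have h0 : (sh^[i+3] (wrd i)) 0 = 2 := by rw [sh_iterate]; simpa using wrd_two1 i
  have hsh : sh (sh^[i+3] (wrd i)) = sh^[i+4] (wrd i) := by
    rw [← Function.iterate_succ_apply' sh (i+3)]
  rw [h0, hsh, one_div]
  have h2 : cfv (sh^[i+4] (wrd i)) = 2 + 1/(cfv (wrd (i+1))) := by
    have := tl_second ha hL i
    rw [tl, show L + Eb i + i + 4 = L + Eb i + (i+4) from by omega, tail_at ha hL] at this
    exact this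
  rw [h2, one_div]
  norm_num

/-- the rho value at the end of the 1-run of block `i` (i ≥ 1) -/
lemma rho_run (i : ℕ) (hi : 1 ≤ i) :
    |rho a (L + Eb i + i + 2) - gr| ≤ 2 * (9/16)^(i+3)
    ∧ 4/3 ≤ rho a (L + Eb i + i + 2) ∧ rho a (L + Eb i + i + 2) ≤ 3 := by
  have hEb5 : 5 ≤ Eb i := by
    have := Eb_mono.le_iff_le.mpr hi
    have h1 : Eb 1 ≤ Eb i := Eb_mono.monotone hi
    simpa [Eb] using h1
  set m := L + Eb i - 1 with hm
  have hm1 : 1 ≤ m := by omega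
  have hiter : rho a (m + (i+3)) = gmap^[i+3] (rho a m) := by
    apply rho_gmap_iter ha hm1
    intro k hk
    have : m + 1 + k = L + Eb i + k := by omega
    rw [this, aval hL i k]
    exact wrd_one (by omega)
  have hmeq : m + (i+3) = L + Eb i + i + 2 := by omega
  have hbase : 4/3 ≤ rho a m ∧ rho a m ≤ 3 := by
    have hup : rho a m ≤ 3 := by
      apply rho_le_three ha (by omega)
      exact a_le_two ha hL (by omega)
    have hlow : 4/3 ≤ rho a m := by
      apply rho_ge_43 ha (by omega)
      rcases Nat.lt_or_ge (m-1) 2 with hc | hc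
      ·
        -- m = L + Eb i - 1 ≥ 4, so m - 1 ≥ 3 ≥ 2; contradiction
        omega
      · apply rho_le_three ha hc
        exact a_le_two ha hL (by omega)
    exact ⟨hlow, hup⟩
  have := gmap_iter_bound hbase.1 hbase.2 (i+3)
  rw [← hmeq, hiter]
  exact ⟨this.2, this.1.1, this.1.2⟩

/-- lambda estimate at the second-2 position -/
lemma lam_second_close (i : ℕ) (hi : 1 ≤ i) :
    |lam a (L + Eb i + i + 3) - 3| ≤ 2 * (9/16)^(i+3) := by
  set δ := (2:ℝ) * (9/16)^(i+3) with hδ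
  obtain ⟨hA1, hA2, hA3⟩ := cfv_wrd_close (a := a) (L := L) ha hL (i+1)
  obtain ⟨hR1, hR2, hR3⟩ := rho_run ha hL i hi
  have hEb5 : 5 ≤ Eb i := by
    have h1 : Eb 1 ≤ Eb i := Eb_mono.monotone hi
    simpa [Eb] using h1
  have hm1 : 1 ≤ L + Eb i + i + 2 := by omega
  have hval : (a (L + Eb i + i + 2 + 1) : ℝ) = 2 := by
    rw [show L + Eb i + i + 2 + 1 = L + Eb i + (i+3) from by omega, aval hL i (i+3)]
    rw [wrd_two1]
    norm_num
  have hrec : rho a (L + Eb i + i + 3) = 2 + 1/(rho a (L + Eb i + i + 2)) := by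
    rw [show L + Eb i + i + 3 = (L + Eb i + i + 2) + 1 from by omega,
      rho_rec ha hm1, hval]
  have hlam : lam a (L + Eb i + i + 3)
      = (2 + 1/(cfv (wrd (i+1)))) + 1/(2 + 1/(rho a (L + Eb i + i + 2))) := by
    rw [lam_rho ha hL _ (by omega), hrec]
    congr 1
    rw [show L + Eb i + i + 3 + 1 = L + Eb i + i + 4 from by omega]
    exact tl_second ha hL i
  rw [hlam]
  have hA1' : |cfv (wrd (i+1)) - gr| ≤ δ := by
    apply le_trans hA1
    rw [hδ]
    have : (9/16:ℝ)^(i+1+3) ≤ (9/16)^(i+3) := by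
      apply pow_le_pow_of_le_one (by norm_num) (by norm_num)
      omega
    nlinarith
  exact (close3 hA2 hR2 hA1' hR1).1

/-- lambda estimate at the first-2 position -/
lemma lam_first_close (i : ℕ) (hi : 1 ≤ i) :
    |lam a (L + Eb i + i + 2) - 3| ≤ 2 * (9/16)^(i+3) := by
  set δ := (2:ℝ) * (9/16)^(i+3) with hδ
  obtain ⟨hA1, hA2, hA3⟩ := cfv_wrd_close (a := a) (L := L) ha hL (i+1)
  obtain ⟨hR1, hR2, hR3⟩ := rho_run ha hL i hi
  have hEb5 : 5 ≤ Eb i := by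
    have h1 : Eb 1 ≤ Eb i := Eb_mono.monotone hi
    simpa [Eb] using h1
  have hlam : lam a (L + Eb i + i + 2)
      = (2 + 1/(2 + 1/(cfv (wrd (i+1))))) + 1/(rho a (L + Eb i + i + 2)) := by
    rw [lam_rho ha hL _ (by omega)]
    congr 1
    rw [show L + Eb i + i + 2 + 1 = L + Eb i + i + 3 from by omega]
    exact tl_first ha hL i
  rw [hlam]
  have hA1' : |cfv (wrd (i+1)) - gr| ≤ δ := by
    apply le_trans hA1
    rw [hδ]
    have : (9/16:ℝ)^(i+1+3) ≤ (9/16)^(i+3) := by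
      apply pow_le_pow_of_le_one (by norm_num) (by norm_num)
      omega
    nlinarith
  exact (close3 hA2 hR2 hA1' hR1).2

/-- lambda is at most 5/2 at positions followed by a 1 -/
lemma lam_one_small (m : ℕ) (hm : L + 2 ≤ m) (h1 : a (m+1) = 1) :
    lam a m ≤ 5/2 := by
  have htl : tl a (m+1) ≤ 7/4 := by
    have hpos : ∀ n, 1 ≤ (sh^[m+1] a) n := sh_pos ha (m+1)
    have e : tl a (m+1) = 1 + (cfv (sh^[m+2] a))⁻¹ := by
      rw [tl, cfv_eq hpos]
      have h0 : (sh^[m+1] a) 0 = 1 := by rw [sh_iterate]; simpa using h1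
      have hsh : sh (sh^[m+1] a) = sh^[m+2] a := (Function.iterate_succ_apply' sh (m+1) a).symm
      rw [h0, hsh]
      norm_num
    have h12 : 4/3 ≤ cfv (sh^[m+2] a) := by
      apply (cfv12_mem ?_ ?_).1
      · intro n; rw [sh_iterate]; exact ha _
      · intro n; rw [sh_iterate]; exact a_le_two ha hL (by omega)
    have : (cfv (sh^[m+2] a))⁻¹ ≤ 3/4 := by
      rw [inv_le_comm₀ (by linarith) (by norm_num)]
      linarith
    rw [e]; linarith
  have hrho : 4/3 ≤ rho a m := by
    apply rho_ge_43 ha (by omega)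
    rcases Nat.lt_or_ge (m-1) 2 with hc | hc
    · -- m - 1 ≤ 1 : then L = 0, m = 2, m - 1 = 1
      have hm1 : m - 1 = 1 := by omega
      have hL0 : L = 0 := by omega
      have : rho a 1 = (a 1 : ℝ) := by
        rw [rho]
        have : Kk a 2 = a 1 := by simp [Kk]
        rw [this]
        simp [Kk]
      rw [hm1, this]
      have h2 : a 1 ≤ 2 := a_le_two ha hL (by omega)
      have h2' : (a 1 : ℝ) ≤ 2 := by exact_mod_cast h2
      linarith
    · apply rho_le_three ha hc
      exact a_le_two ha hL (by omega)
  have hinv : 1 / rho a m ≤ 3/4 := by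
    rw [div_le_iff₀ (by linarith)]
    linarith
  rw [lam_rho ha hL m (by omega)]
  linarith

lemma Kk_lt_of_lt {m n : ℕ} (hm : 2 ≤ m) (hmn : m < n) : Kk a m < Kk a n := by
  induction n with
  | zero => omega
  | succ n ih =>
    rcases Nat.lt_or_ge m n with h | h
    · have h1 := ih h
      have h2 : Kk a n ≤ Kk a (n+1) := by
        obtain ⟨n', rfl⟩ : ∃ n', n = n' + 1 := ⟨n - 1, by omega⟩
        exact Kk_mono ha n'
      omega
    · obtain ⟨m', rfl⟩ : ∃ m', m = m' + 2 := ⟨m - 2, by omega⟩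
      rw [show n + 1 = m' + 3 from by omega]
      exact Kk_strict ha m'

/-- infinitude of solutions below 3 -/
lemma sols_infinite {c : ℝ} (hc0 : 0 < c) (hc3 : c < 3) :
    (diophSols c (cfv a)).Infinite := by
  obtain ⟨I, hI⟩ := exists_pow_lt_of_lt_one (show (0:ℝ) < (3 - c)/2 by linarith)
    (show (9:ℝ)/16 < 1 by norm_num)
  set pos : ℕ → ℕ := fun i => L + Eb (i + I + 1) + (i + I + 1) + 3 with hpos
  have hposval : ∀ i, pos i = L + Eb (i + I + 1) + (i + I + 1) + 3 := fun i => rfl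
  have hmem : ∀ i, convQ a (pos i) ∈ diophSols c (cfv a) := by
    intro i
    rw [convQ_mem_sols_iff ha hc0]
    have hcl := lam_second_close ha hL (i + I + 1) (by omega)
    have hpow : (9/16:ℝ)^(i + I + 1 + 3) ≤ (9/16)^I := by
      apply pow_le_pow_of_le_one (by norm_num) (by norm_num)
      omega
    have : |lam a (pos i) - 3| ≤ 2 * (9/16)^I := by
      apply le_trans hcl
      nlinarith
    rw [abs_le] at this
    nlinarith [hI]
  have hinj : Function.Injective (fun i => convQ a (pos i)) := by
    intro i j hij
    by_contra hne
    have hposlt : ∀ i j, i < j → pos i < pos j := by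
      intro i j h
      have hE := Eb_mono (show i + I + 1 < j + I + 1 by omega)
      rw [hposval, hposval]
      omega
    have hdlt : ∀ i j, i < j → (convQ a (pos i)).den < (convQ a (pos j)).den := by
      intro i j h
      have e1 := den_convQ (a := a) ha (pos i)
      have e2 := den_convQ (a := a) ha (pos j)
      rw [e1, e2]
      apply Kk_lt_of_lt ha hL
      · rw [hposval]; omega
      · have := hposlt i j h; omega
    have hij' : convQ a (pos i) = convQ a (pos j) := hij
    rcases Nat.lt_or_ge i j with h | h
    · have := hdlt i j h
      rw [hij'] at this
      omega
    · have hj : j < i := by omega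
      have := hdlt j i hj
      rw [hij'] at this
      omega
  exact Set.infinite_of_injective_forall_mem hinj hmem

/-- finiteness of solutions above 3 -/
lemma sols_finite {c : ℝ} (hc3 : 3 < c) : (diophSols c (cfv a)).Finite := by
  obtain ⟨I₀, hI₀⟩ := exists_pow_lt_of_lt_one (show (0:ℝ) < (c - 3)/2 by linarith)
    (show (9:ℝ)/16 < 1 by norm_num)
  set I := I₀ + 1 with hIdef
  have hI : (9/16:ℝ)^I < (c-3)/2 := by
    apply lt_of_le_of_lt _ hI₀
    apply pow_le_pow_of_le_one (by norm_num) (by norm_num)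
    omega
  have hbound : ∀ m, c < lam a m → m < L + Eb I := by
    intro m hm
    by_contra hge
    push_neg at hge
    have hEbI : 5 ≤ Eb I := by
      have h1 : Eb 1 ≤ Eb I := Eb_mono.monotone (by omega)
      simpa [Eb] using h1
    obtain ⟨i, hi1, hi2⟩ := Eb_decomp (m + 1 - L)
    have hiI : I ≤ i := by
      have h1 : Eb I < Eb (i+1) := by omega
      have := (Eb_mono.lt_iff_lt).mp h1
      omega
    set j := m + 1 - L - Eb i with hj
    have hm1 : m + 1 = L + Eb i + j := by omega
    have hjlt : j < i + 5 := by
      have : Eb (i+1) = Eb i + (i+5) := rfl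
      omega
    have hclose : ∀ i', 1 ≤ i' → I ≤ i' → ¬ (c < lam a (L + Eb i' + i' + 2)) ∧
        ¬ (c < lam a (L + Eb i' + i' + 3)) := by
      intro i' h1 h2
      have hpow : (9/16:ℝ)^(i'+3) ≤ (9/16)^I := by
        apply pow_le_pow_of_le_one (by norm_num) (by norm_num)
        omega
      constructor
      · have := lam_first_close ha hL i' h1
        rw [abs_le] at this
        intro hcon
        nlinarith
      · have := lam_second_close ha hL i' h1
        rw [abs_le] at this
        intro hcon
        nlinarith
    rcases Nat.lt_or_ge j (i+3) with hj3 | hj3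
    · -- next entry is a 1
      have ha1 : a (m+1) = 1 := by
        rw [hm1, aval hL i j]
        exact wrd_one hj3
      have h5 : lam a m ≤ 5/2 := by
        apply lam_one_small ha hL m _ ha1
        have : 5 ≤ Eb i := by
          have h1 : Eb 1 ≤ Eb i := Eb_mono.monotone (by omega)
          simpa [Eb] using h1
        omega
      linarith
    · rcases Nat.lt_or_ge j (i+4) with hj4 | hj4
      · have : j = i + 3 := by omega
        have hmeq : m = L + Eb i + i + 2 := by omega
        exact (hclose i (by omega) hiI).1 (by rw [← hmeq]; exact hm)
      · have : j = i + 4 := by omega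
        have hmeq : m = L + Eb i + i + 3 := by omega
        exact (hclose i (by omega) hiI).2 (by rw [← hmeq]; exact hm)
  apply Set.Finite.subset (Set.Finite.image (fun m => convQ a m) (Set.finite_Iio (L + Eb I)))
  intro r hr
  obtain ⟨n, hn1, hn2⟩ := sols_subset ha (by linarith : (2:ℝ) ≤ c) hr
  exact ⟨n, hbound n hn1, hn2⟩

lemma kval_cfv_eq : kval (cfv a) = 3 := by
  have h3 : ((3:ℝ≥0∞)) = ENNReal.ofReal 3 := by
    rw [ENNReal.ofReal_ofNat]
  rw [kval]
  apply le_antisymm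
  · apply sSup_le
    rintro y ⟨c, ⟨hc0, hcinf⟩, rfl⟩
    have hc3 : c ≤ 3 := by
      by_contra h
      push_neg at h
      exact hcinf (sols_finite ha hL h)
    rw [h3]
    exact ENNReal.ofReal_le_ofReal hc3
  · by_contra hlt
    push_neg at hlt
    have h1 : ENNReal.ofReal 1 ≤ sSup (ENNReal.ofReal ''
        {c : ℝ | 0 < c ∧ (diophSols c (cfv a)).Infinite}) := by
      apply le_sSup
      exact ⟨1, ⟨one_pos, sols_infinite ha hL one_pos (by norm_num)⟩, rfl⟩
    obtain ⟨r, hr0, hr1, hr2⟩ := ENNReal.lt_iff_exists_real_btwn.mp hlt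
    have hr3 : r < 3 := by
      rw [h3] at hr2
      exact (ENNReal.ofReal_lt_ofReal_iff (by norm_num)).mp hr2
    have hrpos : 0 < r := by
      by_contra h
      push_neg at h
      rw [ENNReal.ofReal_eq_zero.mpr h] at hr1
      have := lt_of_le_of_lt h1 hr1
      simp at this
    have hle : ENNReal.ofReal r ≤ sSup (ENNReal.ofReal ''
        {c : ℝ | 0 < c ∧ (diophSols c (cfv a)).Infinite}) := by
      apply le_sSup
      exact ⟨r, ⟨hrpos, sols_infinite ha hL hrpos hr3⟩, rfl⟩
    exact absurd hr1 (not_lt.mpr hle)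

lemma cfv_mem_kinv3 : cfv a ∈ kinv3 :=
  ⟨irrational_cfv ha, kval_cfv_eq ha hL⟩

end Estimates

/-! ### translation invariance of kval -/

lemma den_add_int (r : ℚ) (z : ℤ) : (r + (z:ℚ)).den = r.den := by
  have hden : (0:ℤ) < (r.den : ℤ) := by exact_mod_cast r.pos
  have h1 : IsCoprime (r.num) (r.den : ℤ) := by
    rw [Int.isCoprime_iff_gcd_eq_one]
    exact r.reduced
  have hco : IsCoprime (r.num + (r.den : ℤ) * z) ((r.den : ℤ)) := h1.add_mul_left_left z
  have hco' : Nat.Coprime (r.num + (r.den:ℤ) * z).natAbs ((r.den:ℤ)).natAbs := by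
    have := Int.isCoprime_iff_gcd_eq_one.mp hco
    simpa [Int.gcd] using this
  have hd0 : ((r.den:ℤ):ℚ) ≠ 0 := by
    have : (r.den:ℤ) ≠ 0 := by omega
    exact_mod_cast this
  have heq : r + (z:ℚ) = ((r.num + (r.den:ℤ) * z : ℤ) : ℚ) / ((r.den:ℤ) : ℚ) := by
    conv_lhs => rw [← Rat.num_div_den r]
    push_cast
    field_simp
  have := Rat.den_div_eq_of_coprime hden hco'
  rw [heq]
  exact_mod_cast this

lemma diophSols_add (c x : ℝ) (z : ℤ) :
    diophSols c (x + (z:ℤ)) = (fun r => r + (z:ℚ)) '' diophSols c x := by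
  ext r
  simp only [diophSols, Set.mem_setOf_eq, Set.mem_image]
  constructor
  · intro h
    refine ⟨r - (z:ℚ), ?_, by ring⟩
    have hden : (r - (z:ℚ)).den = r.den := by
      have : r - (z:ℚ) = r + ((-z : ℤ) : ℚ) := by push_cast; ring
      rw [this, den_add_int]
    rw [hden]
    have harg : x - ((r - (z:ℚ) : ℚ) : ℝ) = x + (z:ℤ) - (r:ℝ) := by
      push_cast; ring
    rw [harg]
    exact h
  · rintro ⟨s, hs, rfl⟩
    have hden : (s + (z:ℚ)).den = s.den := den_add_int s z
    rw [hden]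
    have harg : x + (z:ℤ) - ((s + (z:ℚ) : ℚ) : ℝ) = x - (s:ℝ) := by
      push_cast; ring
    rw [harg]
    exact hs

lemma kval_add_int (x : ℝ) (z : ℤ) : kval (x + (z:ℤ)) = kval x := by
  rw [kval, kval]
  congr 1
  ext c
  simp only [Set.mem_image, Set.mem_setOf_eq]
  constructor
  · rintro ⟨c', ⟨hc0, hinf⟩, rfl⟩
    refine ⟨c', ⟨hc0, ?_⟩, rfl⟩
    rw [diophSols_add] at hinf
    exact (Set.infinite_image_iff (add_left_injective (z:ℚ)).injOn).mp hinf
  · rintro ⟨c', ⟨hc0, hinf⟩, rfl⟩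
    refine ⟨c', ⟨hc0, ?_⟩, rfl⟩
    rw [diophSols_add]
    exact hinf.image (add_left_injective (z:ℚ)).injOn

lemma kinv3_add_int {x : ℝ} (hx : x ∈ kinv3) (z : ℤ) : x + (z:ℤ) ∈ kinv3 :=
  ⟨Irrational.add_intCast hx.1 z, by rw [kval_add_int]; exact hx.2⟩

/-! ### prefixed sequences and density -/

def app (l : List ℕ) (b : ℕ → ℕ) : ℕ → ℕ := fun n => l.getD n (b (n - l.length))

lemma app_pos {l : List ℕ} {b : ℕ → ℕ} (hl : ∀ c ∈ l, 1 ≤ c) (hb : ∀ n, 1 ≤ b n) :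
    ∀ n, 1 ≤ app l b n := by
  intro n
  rw [app]
  rcases Nat.lt_or_ge n l.length with h | h
  · rw [List.getD_eq_getElem l _ h]
    exact hl _ (List.getElem_mem h)
  · rw [List.getD_eq_default l _ (by omega)]
    exact hb _

lemma app_suffix (l : List ℕ) (b : ℕ → ℕ) (n : ℕ) : app l b (n + l.length) = b n := by
  rw [app, List.getD_eq_default l _ (by omega)]
  congr 1
  omega

lemma app_cons_zero (c : ℕ) (l : List ℕ) (b : ℕ → ℕ) : app (c :: l) b 0 = c := rfl

lemma sh_app (c : ℕ) (l : List ℕ) (b : ℕ → ℕ) : sh (app (c :: l) b) = app l b := by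
  funext n
  rw [sh, app, app]
  simp only [List.getD_cons_succ, List.length_cons]
  congr 2
  omega

lemma euclid : ∀ b : ℕ, ∀ A : ℕ, 1 ≤ b → b < A → Nat.Coprime A b →
    ∃ l : List ℕ, l ≠ [] ∧ (∀ c ∈ l, 1 ≤ c) ∧
      ∀ ext : ℕ → ℕ, (∀ n, 1 ≤ ext n) →
        convQ (app l ext) (l.length - 1) = (A:ℚ)/(b:ℚ) := by
  intro b
  induction b using Nat.strong_induction_on with
  | _ b ih =>
    intro A hb hbA hco
    rcases Nat.lt_or_ge b 2 with hb1 | hb2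
    · -- b = 1
      have hb1' : b = 1 := by omega
      subst hb1'
      refine ⟨[A], by simp, by simp; omega, ?_⟩
      intro ext hext
      have : Hh (app [A] ext) 1 = A := by
        show Hh (app [A] ext) 1 = A
        have : app [A] ext 0 = A := rfl
        simp [Hh, this]
      simp [convQ, this, Kk]
    · -- b ≥ 2
      set r := A % b with hr
      set q := A / b with hq
      have hr0 : r ≠ 0 := by
        intro h0
        have : b ∣ A := Nat.dvd_of_mod_eq_zero h0
        have h1 : Nat.gcd A b = b := Nat.gcd_eq_right this
        rw [Nat.Coprime] at hco
        omega
      have hrb : r < b := Nat.mod_lt A (by omega)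
      have hq1 : 1 ≤ q := by
        rw [hq]
        exact Nat.one_le_div_iff (by omega) |>.mpr (by omega)
      have hcobr : Nat.Coprime b r := by
        have h1 : Nat.gcd b A = Nat.gcd (A % b) b := Nat.gcd_rec b A
        have h2 : Nat.gcd b A = 1 := by rw [Nat.gcd_comm]; exact hco
        rw [Nat.Coprime, Nat.gcd_comm, ← h1, h2]
      obtain ⟨l', hne, hpos', hval'⟩ := ih r hrb b (by omega) hrb hcobr
      have hposall : ∀ c ∈ q :: l', 1 ≤ c := by
        intro c hc
        rcases List.mem_cons.mp hc with h | h
        · omega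
        · exact hpos' c h
      refine ⟨q :: l', by simp, hposall, ?_⟩
      intro ext hext
      have hlen : (q :: l').length - 1 = (l'.length - 1) + 1 := by
        cases l' with
        | nil => exact absurd rfl hne
        | cons c t => simp
      rw [hlen]
      have happos : ∀ n, 1 ≤ app (q :: l') ext n := app_pos hposall hext
      rw [convQ_succ happos, sh_app, app_cons_zero, hval' ext hext]
      have hbQ : ((b:ℚ)) ≠ 0 := by
        have : b ≠ 0 := by omega
        exact_mod_cast this
      have hrQ : ((r:ℚ)) ≠ 0 := by exact_mod_cast hr0
      have hA : (A:ℚ) = (q:ℚ) * (b:ℚ) + (r:ℚ) := by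
        have h1 := Nat.div_add_mod A b
        have h2 : A = q * b + r := by
          rw [hq, hr, Nat.mul_comm]
          exact h1.symm
        exact_mod_cast congrArg (fun n : ℕ => (n : ℚ)) h2
      rw [inv_div, hA]
      field_simp

lemma exists_kinv3_between {u v : ℝ} (hu : 1 ≤ u) (huv : u < v) :
    ∃ y ∈ kinv3, u < y ∧ y < v := by
  set mid := (u + v)/2 with hmid
  set δ := (v - u)/2 with hδ
  have hδ0 : 0 < δ := by rw [hδ]; linarith
  have hmid1 : 1 + δ ≤ mid := by rw [hmid, hδ]; linarith
  obtain ⟨p, hpN, hp⟩ := Nat.exists_infinite_primes (max (⌈3/δ⌉₊ + 1) 2)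
  have hp2 : 2 ≤ p := le_trans (le_max_right _ _) hpN
  have hppos : (0:ℝ) < p := by exact_mod_cast (by omega : 0 < p)
  have hp3δ : 3/δ < (p:ℝ) := by
    have h1 : (⌈3/δ⌉₊ + 1 : ℕ) ≤ p := le_trans (le_max_left _ _) hpN
    have h2 : 3/δ ≤ (⌈3/δ⌉₊ : ℝ) := Nat.le_ceil _
    have h3 : ((⌈3/δ⌉₊ + 1 : ℕ) : ℝ) ≤ p := by exact_mod_cast h1
    push_cast at h3
    linarith
  have hpinv : 1/(p:ℝ) < δ/3 := by
    rw [div_lt_div_iff₀ hppos (by norm_num)]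
    rw [div_lt_iff₀ hδ0] at hp3δ
    linarith
  have hmidpos : 0 < mid := by linarith
  have hmp0 : 0 ≤ mid * p := by positivity
  set A0 : ℕ := ⌊mid * p⌋₊ + 1 with hA0
  have hA0gt : mid * p < (A0:ℝ) := by
    rw [hA0]; push_cast; exact Nat.lt_floor_add_one _
  have hA0le : (A0:ℝ) ≤ mid * p + 1 := by
    rw [hA0]; push_cast
    have := Nat.floor_le hmp0
    linarith
  set A : ℕ := if p ∣ A0 then A0 + 1 else A0 with hA
  have hAcases : A = A0 + 1 ∧ p ∣ A0 ∨ A = A0 ∧ ¬ p ∣ A0 := by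
    rw [hA]; split_ifs with h
    · exact Or.inl ⟨rfl, h⟩
    · exact Or.inr ⟨rfl, h⟩
  have hnd : ¬ p ∣ A := by
    rcases hAcases with ⟨hAe, hdvd⟩ | ⟨hAe, hdvd⟩
    · rw [hAe]
      intro hd
      have h1 : p ∣ 1 := by simpa using Nat.dvd_sub hd hdvd
      have := Nat.le_of_dvd one_pos h1
      omega
    · rw [hAe]; exact hdvd
  have hcast : ((A0+1:ℕ):ℝ) = (A0:ℝ) + 1 := by push_cast; ring
  have hAgt : mid * p < (A:ℝ) := by
    rcases hAcases with ⟨hAe, _⟩ | ⟨hAe, _⟩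
    · rw [hAe, hcast]; linarith
    · rw [hAe]; exact hA0gt
  have hAle : (A:ℝ) ≤ mid * p + 2 := by
    rcases hAcases with ⟨hAe, _⟩ | ⟨hAe, _⟩
    · rw [hAe, hcast]; linarith
    · rw [hAe]; linarith
  have hco : Nat.Coprime A p := ((Nat.Prime.coprime_iff_not_dvd hp).mpr hnd).symm
  have hpA : p < A := by
    have hr : (p:ℝ) < (A:ℝ) := by nlinarith
    exact_mod_cast hr
  obtain ⟨l, hlne, hlpos, hlval⟩ := euclid p A (by omega) hpA hco
  set aa := app l (wrd 0) with haa
  have haapos : ∀ n, 1 ≤ aa n := app_pos hlpos (fun n => wrd_pos 0 n)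
  have haL : ∀ n, aa (n + l.length) = wrd 0 n := app_suffix l (wrd 0)
  have hy : cfv aa ∈ kinv3 := cfv_mem_kinv3 haapos haL
  have hval := hlval (wrd 0) (fun n => wrd_pos 0 n)
  have hlen1 : 1 ≤ l.length := List.length_pos_iff.mpr hlne
  have hlen2 : (l.length - 1) + 1 = l.length := by omega
  have hdenval : Kk aa l.length = p := by
    have h1 : (convQ aa (l.length - 1)).den = Kk aa ((l.length - 1) + 1) :=
      den_convQ haapos _
    rw [hlen2, hval] at h1
    have h3 : ((A:ℚ)/(p:ℚ)).den = p := by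
      have hco' : Nat.Coprime ((A:ℤ)).natAbs ((p:ℤ)).natAbs := by simpa using hco
      have h4 := Rat.den_div_eq_of_coprime (show (0:ℤ) < (p:ℤ) by exact_mod_cast (by omega : 0 < p)) hco'
      have h5 : ((A:ℤ):ℚ) = (A:ℚ) := by push_cast; ring
      have h6 : ((p:ℤ):ℚ) = (p:ℚ) := by push_cast; ring
      rw [h5, h6] at h4
      exact_mod_cast h4
    rw [h3] at h1
    omega
  have herr := err_formula haapos (l.length - 1)
  rw [hlen2, hdenval] at herr
  have hconveq : conv aa (l.length - 1) = (A:ℝ)/(p:ℝ) := by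
    rw [← conv_eq_cast, hval]
    push_cast
    ring
  rw [hconveq] at herr
  have hlam1 : 1 ≤ lam aa (l.length - 1) := lam_ge_one haapos _
  have hclose : |cfv aa - (A:ℝ)/(p:ℝ)| ≤ 1/(p:ℝ) := by
    rw [herr]
    rw [div_le_div_iff₀ (by positivity) hppos]
    have hp2' : (2:ℝ) ≤ (p:ℝ) := by exact_mod_cast hp2
    have hp1 : (1:ℝ) ≤ p := by linarith
    nlinarith [mul_le_mul_of_nonneg_left hlam1 (sq_nonneg (p:ℝ))]
  have hAp1 : mid < (A:ℝ)/p := by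
    rw [lt_div_iff₀ hppos]
    linarith
  have hAp2 : (A:ℝ)/p ≤ mid + 2/p := by
    rw [div_le_iff₀ hppos]
    have : (mid + 2/p) * p = mid * p + 2 := by field_simp
    rw [this]
    linarith
  rw [abs_le] at hclose
  refine ⟨cfv aa, hy, ?_, ?_⟩
  · have : u = mid - δ := by rw [hmid, hδ]; ring
    rw [this]
    linarith
  · have : v = mid + δ := by rw [hmid, hδ]; ring
    rw [this]
    have h2p : 2/(p:ℝ) < 2*δ/3 := by
      have e1 : 2/(p:ℝ) = 2 * (1/(p:ℝ)) := by ring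
      have e2 : 2*δ/3 = 2 * (δ/3) := by ring
      rw [e1, e2]
      linarith
    linarith

lemma dense_kinv3 : Dense kinv3 := by
  intro x
  rw [Metric.mem_closure_iff]
  intro ε hε
  set z : ℤ := ⌈2 - x⌉ with hz
  have hxz : 2 ≤ x + z := by
    have := Int.le_ceil (2 - x)
    rw [← hz] at this
    linarith
  set ε' := min ε 1 with hε'
  have hε'0 : 0 < ε' := lt_min hε one_pos
  have hε'1 : ε' ≤ 1 := min_le_right _ _
  have hε'ε : ε' ≤ ε := min_le_left _ _
  obtain ⟨y, hy, hy1, hy2⟩ := exists_kinv3_between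
    (u := x + z - ε'/2) (by linarith) (by linarith : x + z - ε'/2 < x + z + ε'/2)
  refine ⟨y + ((-z : ℤ) : ℝ), kinv3_add_int hy (-z), ?_⟩
  push_cast
  rw [Real.dist_eq, abs_lt]
  constructor <;> push_cast <;> linarith

/-! ### a residual set where kval is infinite -/

def Uset (m : ℕ) : Set ℝ :=
  ⋃ r : ℚ, (Metric.ball (r:ℝ) (1/(((m:ℝ)+1) * ((r.den:ℝ))^2)) \ {(r:ℝ)})

lemma Uset_open (m : ℕ) : IsOpen (Uset m) :=
  isOpen_iUnion fun r => Metric.isOpen_ball.sdiff isClosed_singleton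

lemma Uset_dense (m : ℕ) : Dense (Uset m) := by
  intro x
  rw [Metric.mem_closure_iff]
  intro ε hε
  obtain ⟨r, hr⟩ := exists_rat_near x (half_pos hε)
  have hden : (0:ℝ) < (r.den:ℝ) := by exact_mod_cast r.pos
  set R := 1/(((m:ℝ)+1) * ((r.den:ℝ))^2) with hR
  have hR0 : 0 < R := by
    rw [hR]
    apply div_pos one_pos
    positivity
  set t := min (ε/2) R with ht
  have ht0 : 0 < t := lt_min (half_pos hε) hR0
  refine ⟨(r:ℝ) + t/2, ?_, ?_⟩
  · apply Set.mem_iUnion.mpr ⟨r, ?_⟩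
    constructor
    · rw [Metric.mem_ball, Real.dist_eq]
      have : |(r:ℝ) + t/2 - r| = t/2 := by
        rw [show (r:ℝ) + t/2 - r = t/2 from by ring]
        exact abs_of_pos (by linarith)
      rw [this, ← hR]
      have := min_le_right (ε/2) R
      linarith
    · simp only [Set.mem_singleton_iff]
      intro hcon
      have : t/2 = 0 := by linarith [hcon.symm.le, hcon.le]
      linarith
  · rw [Real.dist_eq]
    have h1 : |x - ((r:ℝ) + t/2)| ≤ |x - r| + t/2 := by
      have e : x - ((r:ℝ) + t/2) = (x - r) + (-(t/2)) := by ring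
      rw [e]
      refine le_trans (abs_add_le _ _) ?_
      rw [abs_neg, abs_of_pos (show (0:ℝ) < t/2 by linarith)]
    have := min_le_left (ε/2) R
    linarith [hr]

lemma kval_top_of_mem (x : ℝ) (hx : ∀ m : ℕ, x ∈ Uset m) : kval x = ⊤ := by
  have key : ∀ M : ℕ, (diophSols ((M:ℝ)+1) x).Infinite := by
    intro M
    by_contra hfin
    rw [Set.not_infinite] at hfin
    set F := hfin.toFinset with hF
    set f : ℚ → ℕ := fun q => ⌈1/(|x - (q:ℝ)| * ((q.den:ℝ))^2)⌉₊ with hf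
    set m := M + F.sup f with hm
    obtain ⟨r, hrmem⟩ := Set.mem_iUnion.mp (hx m)
    obtain ⟨hball, hne⟩ := hrmem
    rw [Metric.mem_ball, Real.dist_eq] at hball
    have hne' : x ≠ (r:ℝ) := by
      simpa [Set.mem_singleton_iff] using hne
    have habs0 : 0 < |x - (r:ℝ)| := by
      rw [abs_pos]
      intro h
      exact hne' (by linarith)
    have hden : (0:ℝ) < (r.den:ℝ) := by exact_mod_cast r.pos
    have hrF : r ∈ F := by
      rw [hF, Set.Finite.mem_toFinset]
      show r ∈ diophSols ((M:ℝ)+1) x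
      rw [diophSols, Set.mem_setOf_eq]
      apply lt_of_lt_of_le hball
      rw [div_le_div_iff₀ (by positivity) (by positivity)]
      have hmM : (M:ℝ) ≤ (m:ℝ) := by exact_mod_cast (by omega : M ≤ m)
      nlinarith [sq_nonneg ((r.den:ℝ))]
    have hsup : f r ≤ m := by
      rw [hm]
      have := Finset.le_sup (f := f) hrF
      omega
    have hgt : 1/(|x - (r:ℝ)| * ((r.den:ℝ))^2) < (m:ℝ) + 1 := by
      have h1 : 1/(|x - (r:ℝ)| * ((r.den:ℝ))^2) ≤ ((f r : ℕ):ℝ) := by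
        rw [hf]
        exact Nat.le_ceil _
      have h2 : ((f r : ℕ):ℝ) ≤ (m:ℝ) := by exact_mod_cast hsup
      linarith
    rw [div_lt_iff₀ (mul_pos habs0 (by positivity))] at hgt
    rw [lt_div_iff₀ (by positivity)] at hball
    nlinarith
  rw [kval, sSup_eq_top]
  intro b hb
  obtain ⟨M, hM⟩ := exists_nat_gt b.toReal
  refine ⟨ENNReal.ofReal ((M:ℝ)+1), ⟨(M:ℝ)+1, ⟨by positivity, key M⟩, rfl⟩, ?_⟩
  rw [← ENNReal.ofReal_toReal (ne_of_lt hb)]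
  apply ENNReal.ofReal_lt_ofReal_iff (by positivity) |>.mpr
  linarith

end KV

end

noncomputable section

/-- The set `k⁻¹(3)` is not a `G_δ` subset of `ℝ`. -/
theorem stmt_4 : ¬ IsGδ kinv3 := by
  intro h
  have h1 : kinv3 ∈ residual ℝ := residual_of_dense_Gδ h KV.dense_kinv3
  have h2 : (⋂ m : ℕ, KV.Uset m) ∈ residual ℝ := by
    rw [countable_iInter_mem]
    exact fun m => residual_of_dense_open (KV.Uset_open m) (KV.Uset_dense m)
  have h3 := Filter.inter_mem h1 h2
  obtain ⟨y, hy1, hy2⟩ := (dense_of_mem_residual h3).nonempty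
  have htop : kval y = ⊤ := KV.kval_top_of_mem y (fun m => Set.mem_iInter.mp hy2 m)
  rw [hy1.2] at htop
  exact (by norm_num : (3:ℝ≥0∞) ≠ ⊤) htop
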